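/- For any maps s, β : {1,…,n} → E, | Σ_{ℓ=1}^k Σ_{i∈G_ℓ} ⟨s_i, β_i − β̄_ℓ⟩ | ≤ Σ_{ℓ=1}^k (1/|G_ℓ|) Σ_{i<j, i,j∈G_ℓ} ‖s_i − s_j‖ · ‖β_i − β_j‖. -/

import Mathlib

open RealInnerProductSpace

section Aux

variable {E : Type*} [NormedAddCommGroup E] [InnerProductSpace ℝ E] {n : ℕ}

/-- Antisymmetrization of the double sum. -/
lemma aux_double (G : Finset (Fin n)) (s β : Fin n → E) :
    ∑ i ∈ G, ∑ j ∈ G, (⟪s i, β i - β j⟫ : ℝ)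
      = ∑ pr ∈ (G ×ˢ G).filter (fun pr => pr.1 < pr.2),
          ⟪s pr.1 - s pr.2, β pr.1 - β pr.2⟫ := by
  have hswap : ∑ i ∈ G, ∑ j ∈ G, (⟪s i, β i - β j⟫ : ℝ)
      = ∑ i ∈ G, ∑ j ∈ G, (⟪s j, β j - β i⟫ : ℝ) := Finset.sum_comm
  have h2 : (2:ℝ) * ∑ i ∈ G, ∑ j ∈ G, (⟪s i, β i - β j⟫ : ℝ)
      = ∑ i ∈ G, ∑ j ∈ G, (⟪s i - s j, β i - β j⟫ : ℝ) := by
    rw [two_mul]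
    nth_rewrite 2 [hswap]
    rw [← Finset.sum_add_distrib]
    refine Finset.sum_congr rfl fun i _ => ?_
    rw [← Finset.sum_add_distrib]
    refine Finset.sum_congr rfl fun j _ => ?_
    rw [inner_sub_left]
    have : (⟪s j, β j - β i⟫ : ℝ) = -⟪s j, β i - β j⟫ := by
      rw [← inner_neg_right]; congr 1; abel
    rw [this]; ring
  have hprod : ∑ i ∈ G, ∑ j ∈ G, (⟪s i - s j, β i - β j⟫ : ℝ)
      = ∑ pr ∈ G ×ˢ G, (⟪s pr.1 - s pr.2, β pr.1 - β pr.2⟫ : ℝ) :=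
    by rw [Finset.sum_product]
  set g : Fin n × Fin n → ℝ := fun pr => (⟪s pr.1 - s pr.2, β pr.1 - β pr.2⟫ : ℝ) with hg
  have hsplit : ∑ pr ∈ G ×ˢ G, g pr
      = ∑ pr ∈ (G ×ˢ G).filter (fun pr => pr.1 < pr.2), g pr
        + ∑ pr ∈ (G ×ˢ G).filter (fun pr => ¬ pr.1 < pr.2), g pr :=
    (Finset.sum_filter_add_sum_filter_not _ _ _).symm
  have hsplit2 : ∑ pr ∈ (G ×ˢ G).filter (fun pr => ¬ pr.1 < pr.2), g pr
      = ∑ pr ∈ (G ×ˢ G).filter (fun pr => pr.2 < pr.1), g pr := by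
    rw [← Finset.sum_filter_add_sum_filter_not ((G ×ˢ G).filter (fun pr => ¬ pr.1 < pr.2))
        (fun pr => pr.1 = pr.2)]
    have hz : ∑ pr ∈ ((G ×ˢ G).filter (fun pr => ¬ pr.1 < pr.2)).filter
        (fun pr => pr.1 = pr.2), g pr = 0 := by
      refine Finset.sum_eq_zero fun pr hpr => ?_
      have := (Finset.mem_filter.mp hpr).2
      simp [hg, this]
    rw [hz, zero_add]
    apply Finset.sum_congr
    · ext pr
      simp only [Finset.filter_filter, Finset.mem_filter]
      constructor
      · rintro ⟨hm, h1, h2⟩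
        exact ⟨hm, lt_of_le_of_ne (not_lt.mp h1) (Ne.symm h2)⟩
      · rintro ⟨hm, h⟩
        exact ⟨hm, not_lt.mpr h.le, fun he => absurd he.symm h.ne⟩
    · intros; rfl
  have hswap2 : ∑ pr ∈ (G ×ˢ G).filter (fun pr => pr.2 < pr.1), g pr
      = ∑ pr ∈ (G ×ˢ G).filter (fun pr => pr.1 < pr.2), g pr := by
    refine Finset.sum_nbij' (fun pr => Prod.swap pr) (fun pr => Prod.swap pr) ?_ ?_ ?_ ?_ ?_
    · intro pr hpr
      simp only [Finset.mem_filter, Finset.mem_product] at hpr ⊢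
      exact ⟨⟨hpr.1.2, hpr.1.1⟩, hpr.2⟩
    · intro pr hpr
      simp only [Finset.mem_filter, Finset.mem_product] at hpr ⊢
      exact ⟨⟨hpr.1.2, hpr.1.1⟩, hpr.2⟩
    · intro pr _; simp
    · intro pr _; simp
    · intro pr _
      simp only [hg, Prod.fst_swap, Prod.snd_swap]
      rw [← inner_neg_neg]
      congr 1 <;> abel
  have h2' : (2:ℝ) * ∑ pr ∈ (G ×ˢ G).filter (fun pr => pr.1 < pr.2), g pr
      = ∑ pr ∈ G ×ˢ G, g pr := by
    rw [hsplit, hsplit2, hswap2]; ring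
  linarith [h2, hprod, h2']

lemma aux_block (G : Finset (Fin n)) (hG : G.Nonempty) (s β : Fin n → E) :
    |∑ i ∈ G, (⟪s i, β i - ((G.card : ℝ))⁻¹ • ∑ j ∈ G, β j⟫ : ℝ)|
      ≤ ((G.card : ℝ))⁻¹ *
          ∑ pr ∈ (G ×ˢ G).filter (fun pr => pr.1 < pr.2),
            ‖s pr.1 - s pr.2‖ * ‖β pr.1 - β pr.2‖ := by
  have hm : (0:ℝ) < (G.card : ℝ) := by
    exact_mod_cast Finset.card_pos.mpr hG
  have key : ∑ i ∈ G, (⟪s i, β i - ((G.card : ℝ))⁻¹ • ∑ j ∈ G, β j⟫ : ℝ)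
      = ((G.card : ℝ))⁻¹ * ∑ i ∈ G, ∑ j ∈ G, (⟪s i, β i - β j⟫ : ℝ) := by
    rw [Finset.mul_sum]
    refine Finset.sum_congr rfl fun i hi => ?_
    have : β i - ((G.card : ℝ))⁻¹ • ∑ j ∈ G, β j
        = ((G.card : ℝ))⁻¹ • ∑ j ∈ G, (β i - β j) := by
      rw [Finset.sum_sub_distrib, smul_sub, Finset.sum_const, ← Nat.cast_smul_eq_nsmul ℝ,
        smul_smul, inv_mul_cancel₀ hm.ne', one_smul]
    rw [this, inner_smul_right, inner_sum]
  rw [key, aux_double, abs_mul, abs_of_pos (inv_pos.mpr hm)]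
  gcongr
  calc |∑ pr ∈ (G ×ˢ G).filter (fun pr => pr.1 < pr.2),
          (⟪s pr.1 - s pr.2, β pr.1 - β pr.2⟫ : ℝ)|
      ≤ ∑ pr ∈ (G ×ˢ G).filter (fun pr => pr.1 < pr.2),
          |(⟪s pr.1 - s pr.2, β pr.1 - β pr.2⟫ : ℝ)| := Finset.abs_sum_le_sum_abs _ _
    _ ≤ ∑ pr ∈ (G ×ˢ G).filter (fun pr => pr.1 < pr.2),
          ‖s pr.1 - s pr.2‖ * ‖β pr.1 - β pr.2‖ := by
        refine Finset.sum_le_sum fun pr _ => abs_real_inner_le_norm _ _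

end Aux

/-- For a partition G₁,…,G_k of {1,…,n} into nonempty blocks and maps
s, β : {1,…,n} → E,
| Σ_ℓ Σ_{i∈G_ℓ} ⟨s_i, β_i − β̄_ℓ⟩ | ≤ Σ_ℓ (1/|G_ℓ|) Σ_{i<j∈G_ℓ} ‖s_i − s_j‖·‖β_i − β_j‖. -/
theorem stmt7 {E : Type*} [NormedAddCommGroup E] [InnerProductSpace ℝ E]
    (n k : ℕ) (hn : 1 ≤ n) (hk : 1 ≤ k)
    (G : Fin k → Finset (Fin n))
    (hne : ∀ ℓ, (G ℓ).Nonempty)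
    (hdisj : ∀ ℓ₁ ℓ₂, ℓ₁ ≠ ℓ₂ → Disjoint (G ℓ₁) (G ℓ₂))
    (hcov : ∀ i, ∃ ℓ, i ∈ G ℓ)
    (s β : Fin n → E) :
    |∑ ℓ, ∑ i ∈ G ℓ, ⟪s i, β i - (((G ℓ).card : ℝ))⁻¹ • ∑ j ∈ G ℓ, β j⟫|
      ≤ ∑ ℓ, (((G ℓ).card : ℝ))⁻¹ *
          ∑ pr ∈ ((G ℓ) ×ˢ (G ℓ)).filter (fun pr => pr.1 < pr.2),
            ‖s pr.1 - s pr.2‖ * ‖β pr.1 - β pr.2‖ := by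
  calc |∑ ℓ, ∑ i ∈ G ℓ, (⟪s i, β i - (((G ℓ).card : ℝ))⁻¹ • ∑ j ∈ G ℓ, β j⟫ : ℝ)|
      ≤ ∑ ℓ, |∑ i ∈ G ℓ, (⟪s i, β i - (((G ℓ).card : ℝ))⁻¹ • ∑ j ∈ G ℓ, β j⟫ : ℝ)| :=
        Finset.abs_sum_le_sum_abs _ _
    _ ≤ _ := Finset.sum_le_sum fun ℓ _ => aux_block (G ℓ) (hne ℓ) s β
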